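/- arXiv:2004.00428 — 4 statements merged into one kernel-verified Lean document; each statement's English description precedes it below -/
import Mathlib

section
/- Suppose ρ: D → ℝ is C¹ and strictly positive on D \ {0}, f: D → ℝⁿ is C¹, and for all x ∈ D \ {0} one has div(ρ·f)(x) ≤ 0 and div(ρ⁻¹·f)(x) ≥ 0. Then ⟨grad ρ(x), f(x)⟩ ≤ 0 for all x ∈ D \ {0}. -/
open scoped BigOperators RealInnerProductSpace

/-- Divergence of a vector field on ℝⁿ. -/
noncomputable def vdiv {n : ℕ} (f : EuclideanSpace ℝ (Fin n) → EuclideanSpace ℝ (Fin n))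
    (x : EuclideanSpace ℝ (Fin n)) : ℝ :=
  ∑ i, fderiv ℝ f x (EuclideanSpace.single i (1:ℝ)) i

lemma euclid_sum_single {n : ℕ} (v : EuclideanSpace ℝ (Fin n)) :
    v = ∑ i, (v i) • EuclideanSpace.single i (1:ℝ) := by
  have h := Module.Basis.sum_repr (EuclideanSpace.basisFun (Fin n) ℝ).toBasis v
  simp only [OrthonormalBasis.coe_toBasis_repr_apply, EuclideanSpace.basisFun_repr,
    OrthonormalBasis.coe_toBasis, EuclideanSpace.basisFun_apply] at h
  exact h.symm

lemma vdiv_smul {n : ℕ} (g : EuclideanSpace ℝ (Fin n) → ℝ)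
    (f : EuclideanSpace ℝ (Fin n) → EuclideanSpace ℝ (Fin n)) (x : EuclideanSpace ℝ (Fin n))
    (hg : DifferentiableAt ℝ g x) (hf : DifferentiableAt ℝ f x) :
    vdiv (fun y => g y • f y) x
      = (∑ i, fderiv ℝ g x (EuclideanSpace.single i (1:ℝ)) * f x i) + g x * vdiv f x := by
  unfold vdiv
  rw [Finset.mul_sum, ← Finset.sum_add_distrib]
  refine Finset.sum_congr rfl fun i _ => ?_
  rw [fderiv_fun_smul hg hf]
  simp [mul_comm]
  ring

lemma apply_eq_sum {n : ℕ} (L : EuclideanSpace ℝ (Fin n) →L[ℝ] ℝ) (v : EuclideanSpace ℝ (Fin n)) :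
    L v = ∑ i, L (EuclideanSpace.single i (1:ℝ)) * v i := by
  conv_lhs => rw [euclid_sum_single v]
  rw [map_sum]
  exact Finset.sum_congr rfl fun i _ => by simp [mul_comm]

theorem grad_inner_nonpos_case4 {n : ℕ} (D : Set (EuclideanSpace ℝ (Fin n))) (hD : IsOpen D)
    (h0 : (0 : EuclideanSpace ℝ (Fin n)) ∈ D)
    (ρ : EuclideanSpace ℝ (Fin n) → ℝ) (f : EuclideanSpace ℝ (Fin n) → EuclideanSpace ℝ (Fin n))
    (hρ : ContDiffOn ℝ 1 ρ D) (hρpos : ∀ x ∈ D, x ≠ 0 → 0 < ρ x)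
    (hf : ContDiffOn ℝ 1 f D)
    (hdiv1 : ∀ x ∈ D, x ≠ 0 → vdiv (fun y => ρ y • f y) x ≤ 0)
    (hdiv2 : ∀ x ∈ D, x ≠ 0 → 0 ≤ vdiv (fun y => (ρ y)⁻¹ • f y) x) :
    ∀ x ∈ D, x ≠ 0 → ⟪gradient ρ x, f x⟫ ≤ 0 := by
  intro x hx hx0
  have hnhds := hD.mem_nhds hx
  have hdρ : DifferentiableAt ℝ ρ x := (hρ.contDiffAt hnhds).differentiableAt one_ne_zero
  have hdf : DifferentiableAt ℝ f x := (hf.contDiffAt hnhds).differentiableAt one_ne_zero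
  have hρx : 0 < ρ x := hρpos x hx hx0
  have hinv : HasFDerivAt (fun y => (ρ y)⁻¹) ((-(ρ x ^ 2)⁻¹) • fderiv ℝ ρ x) x :=
    (hasDerivAt_inv hρx.ne').comp_hasFDerivAt x hdρ.hasFDerivAt
  set A : ℝ := ∑ i, fderiv ℝ ρ x (EuclideanSpace.single i (1:ℝ)) * f x i with hA
  set d : ℝ := vdiv f x with hd
  have h1 := hdiv1 x hx hx0
  rw [vdiv_smul ρ f x hdρ hdf] at h1
  have h2 := hdiv2 x hx hx0
  rw [vdiv_smul _ f x hinv.differentiableAt hdf, hinv.fderiv] at h2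
  have hsum : (∑ i, ((-(ρ x ^ 2)⁻¹) • fderiv ℝ ρ x) (EuclideanSpace.single i (1:ℝ)) * f x i)
      = -(ρ x ^ 2)⁻¹ * A := by
    rw [hA, Finset.mul_sum]
    exact Finset.sum_congr rfl fun i _ => by simp; ring
  rw [hsum] at h2
  have hg : ⟪gradient ρ x, f x⟫ = fderiv ℝ ρ x (f x) := InnerProductSpace.toDual_symm_apply
  rw [hg, apply_eq_sum (fderiv ℝ ρ x) (f x), ← hA]
  have hρ2 : (0:ℝ) < ρ x ^ 2 := by positivity
  have h2' : 0 ≤ -A + ρ x * vdiv f x := by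
    have h := mul_nonneg hρ2.le h2
    have e : ρ x ^ 2 * (-(ρ x ^ 2)⁻¹ * A + (ρ x)⁻¹ * vdiv f x) = -A + ρ x * vdiv f x := by
      field_simp
    linarith [e ▸ h]
  linarith
end

section
/- Let ρ: D → ℝ be a positive definite C¹ function with ρ strictly positive on D \ {0}, f: D → ℝⁿ be C¹ with f(0) = 0. If div(ρ⁻¹·f)(x) > 0 and div f(x) ≤ 0 for all x ∈ D \ {0}, then x = 0 is an asymptotically stable equilibrium of ẋ = f(x). -/
open scoped BigOperators RealInnerProductSpace Topology

lemma sum_eval_aux {n : ℕ} (L : EuclideanSpace ℝ (Fin n) →L[ℝ] ℝ) (v : EuclideanSpace ℝ (Fin n)) :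
    ∑ i, v i * L (EuclideanSpace.single i (1:ℝ)) = L v := by
  conv_rhs => rw [← (EuclideanSpace.basisFun (Fin n) ℝ).sum_repr v]
  rw [map_sum]
  simp [EuclideanSpace.basisFun_apply, mul_comm]

lemma div_identity_aux {n : ℕ} {ρ : EuclideanSpace ℝ (Fin n) → ℝ}
    {f : EuclideanSpace ℝ (Fin n) → EuclideanSpace ℝ (Fin n)}
    {x : EuclideanSpace ℝ (Fin n)}
    (hρd : DifferentiableAt ℝ ρ x) (hfd : DifferentiableAt ℝ f x) (hρx : ρ x ≠ 0) :
    vdiv (fun y => (ρ y)⁻¹ • f y) x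
      = (ρ x)⁻¹ * vdiv f x - (ρ x)⁻¹ * (ρ x)⁻¹ * fderiv ℝ ρ x (f x) := by
  set dρ := fderiv ℝ ρ x
  set df := fderiv ℝ f x
  have hinv : HasFDerivAt (fun y => (ρ y)⁻¹)
      ((-ContinuousLinearMap.mulLeftRight ℝ ℝ (ρ x)⁻¹ (ρ x)⁻¹).comp dρ) x :=
    (hasFDerivAt_inv' hρx).comp x hρd.hasFDerivAt
  have hs : HasFDerivAt (fun y => (ρ y)⁻¹ • f y)
      ((ρ x)⁻¹ • df + ((-ContinuousLinearMap.mulLeftRight ℝ ℝ (ρ x)⁻¹ (ρ x)⁻¹).comp dρ).smulRight (f x)) x :=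
    hinv.smul hfd.hasFDerivAt
  have := hs.fderiv
  rw [vdiv, this]
  have key : ∑ i, f x i * dρ (EuclideanSpace.single i (1:ℝ)) = dρ (f x) := sum_eval_aux dρ (f x)
  simp only [ContinuousLinearMap.add_apply, ContinuousLinearMap.smul_apply,
    ContinuousLinearMap.smulRight_apply, ContinuousLinearMap.comp_apply,
    ContinuousLinearMap.neg_apply, ContinuousLinearMap.mulLeftRight_apply,
    PiLp.add_apply, PiLp.smul_apply, smul_eq_mul, PiLp.neg_apply]
  rw [vdiv, ← key, Finset.mul_sum, Finset.mul_sum, ← Finset.sum_sub_distrib]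
  exact Finset.sum_congr rfl fun i _ => by ring

theorem asymptotic_stability_case2 {n : ℕ} (D : Set (EuclideanSpace ℝ (Fin n))) (hD : IsOpen D)
    (h0 : (0 : EuclideanSpace ℝ (Fin n)) ∈ D)
    (ρ : EuclideanSpace ℝ (Fin n) → ℝ) (f : EuclideanSpace ℝ (Fin n) → EuclideanSpace ℝ (Fin n))
    (hρ : ContDiffOn ℝ 1 ρ D) (hρ0 : ρ 0 = 0) (hρpos : ∀ x ∈ D, x ≠ 0 → 0 < ρ x)
    (hf : ContDiffOn ℝ 1 f D) (hf0 : f 0 = 0)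
    (hdiv1 : ∀ x ∈ D, x ≠ 0 → 0 < vdiv (fun y => (ρ y)⁻¹ • f y) x)
    (hdiv2 : ∀ x ∈ D, x ≠ 0 → vdiv f x ≤ 0) :
    ∀ U ∈ 𝓝 (0 : EuclideanSpace ℝ (Fin n)), ∃ V ∈ 𝓝 (0 : EuclideanSpace ℝ (Fin n)),
      ∀ sol : ℝ → EuclideanSpace ℝ (Fin n),
        (∀ t, 0 ≤ t → HasDerivAt sol (f (sol t)) t) →
        (∀ t, 0 ≤ t → sol t ∈ D) →
        sol 0 ∈ V →
        (∀ t, 0 ≤ t → sol t ∈ U) ∧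
          Filter.Tendsto sol Filter.atTop (𝓝 (0 : EuclideanSpace ℝ (Fin n))) := by
  intro U hU
  rcases Nat.eq_zero_or_pos n with hn | hn
  · -- trivial case n = 0
    subst hn
    haveI : Subsingleton (EuclideanSpace ℝ (Fin 0)) := by
      constructor; intro a b; ext i; exact absurd i.2 (by omega)
    refine ⟨Set.univ, Filter.univ_mem, fun sol _ _ _ => ⟨fun t _ => ?_, ?_⟩⟩
    · have : sol t = 0 := Subsingleton.elim _ _
      rw [this]; exact mem_of_mem_nhds hU
    · have : sol = fun _ => 0 := funext fun t => Subsingleton.elim _ _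
      rw [this]; exact tendsto_const_nhds
  haveI : Nontrivial (EuclideanSpace ℝ (Fin n)) := by
    refine ⟨⟨EuclideanSpace.single ⟨0, hn⟩ (1:ℝ), 0, fun h => ?_⟩⟩
    have := congrFun (congrArg (fun v : EuclideanSpace ℝ (Fin n) => (v : Fin n → ℝ)) h) ⟨0, hn⟩
    simp [EuclideanSpace.single_apply] at this
  -- differentiability facts
  have hρdiff : ∀ x ∈ D, DifferentiableAt ℝ ρ x := fun x hx =>
    ((hρ.differentiableOn one_ne_zero).differentiableAt (hD.mem_nhds hx))
  have hfdiff : ∀ x ∈ D, DifferentiableAt ℝ f x := fun x hx =>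
    ((hf.differentiableOn one_ne_zero).differentiableAt (hD.mem_nhds hx))
  set g : EuclideanSpace ℝ (Fin n) → ℝ := fun x => fderiv ℝ ρ x (f x) with hgdef
  have hgneg : ∀ x ∈ D, x ≠ 0 → g x < 0 := by
    intro x hx hx0
    have hρp := hρpos x hx hx0
    have hid := div_identity_aux (hρdiff x hx) (hfdiff x hx) hρp.ne'
    have h1 := hdiv1 x hx hx0
    have h2 := hdiv2 x hx hx0
    have hipos : 0 < (ρ x)⁻¹ := inv_pos.mpr hρp
    have h3 : (ρ x)⁻¹ * (ρ x)⁻¹ * g x < 0 := by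
      have heq : (ρ x)⁻¹ * (ρ x)⁻¹ * g x
          = (ρ x)⁻¹ * vdiv f x - vdiv (fun y => (ρ y)⁻¹ • f y) x := by
        rw [hgdef]; linarith [hid]
      have h4 : (ρ x)⁻¹ * vdiv f x ≤ 0 := mul_nonpos_of_nonneg_of_nonpos hipos.le h2
      rw [heq]; linarith
    nlinarith [mul_pos hipos hipos, h3]
  have hgnonpos : ∀ x ∈ D, g x ≤ 0 := by
    intro x hx
    by_cases hx0 : x = 0
    · subst hx0
      simp [hgdef, hf0]
    · exact (hgneg x hx hx0).le
  have hgcont : ContinuousOn g D := by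
    have h1 : ContinuousOn (fderiv ℝ ρ) D := hρ.continuousOn_fderiv_of_isOpen hD le_rfl
    have h2 : ContinuousOn f D := hf.continuousOn
    exact isBoundedBilinearMap_apply.continuous.comp_continuousOn (h1.prodMk h2)
  have hρcont : ContinuousOn ρ D := hρ.continuousOn
  -- choose radius r with closedBall 0 r ⊆ D ∩ U
  obtain ⟨ε, hε, hball⟩ := Metric.mem_nhds_iff.mp (Filter.inter_mem (hD.mem_nhds h0) hU)
  set r := ε / 2 with hrdef
  have hrpos : 0 < r := by positivity
  have hcb : Metric.closedBall (0 : EuclideanSpace ℝ (Fin n)) r ⊆ D ∩ U := fun x hx =>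
    hball (lt_of_le_of_lt (Metric.mem_closedBall.mp hx) (by rw [hrdef]; linarith))
  have hcbD : Metric.closedBall (0 : EuclideanSpace ℝ (Fin n)) r ⊆ D := fun x hx => (hcb hx).1
  -- minimum of ρ on the sphere of radius r
  have hsne : (Metric.sphere (0 : EuclideanSpace ℝ (Fin n)) r).Nonempty :=
    NormedSpace.sphere_nonempty.mpr hrpos.le
  have hsubD : Metric.sphere (0 : EuclideanSpace ℝ (Fin n)) r ⊆ D := fun x hx =>
    hcbD (Metric.sphere_subset_closedBall hx)
  obtain ⟨x₀, hx₀s, hx₀min⟩ :=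
    (isCompact_sphere (0 : EuclideanSpace ℝ (Fin n)) r).exists_isMinOn hsne (hρcont.mono hsubD)
  set m := ρ x₀ with hmdef
  have hx₀0 : x₀ ≠ 0 := by
    intro h
    rw [h] at hx₀s
    simp [hrpos.ne'] at hx₀s
    exact absurd hx₀s.symm hrpos.ne'
  have hmpos : 0 < m := hρpos x₀ (hsubD hx₀s) hx₀0
  -- the neighborhood V
  refine ⟨Metric.ball 0 r ∩ ρ ⁻¹' Set.Iio m, ?_, ?_⟩
  · refine Filter.inter_mem (Metric.ball_mem_nhds _ hrpos) ?_
    have : ContinuousAt ρ 0 := hρcont.continuousAt (hD.mem_nhds h0)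
    exact this.preimage_mem_nhds (by rw [hρ0]; exact Iio_mem_nhds hmpos)
  intro sol hsol hsolD hsol0
  obtain ⟨hs0ball, hs0ρ⟩ := hsol0
  rw [Set.mem_preimage, Set.mem_Iio] at hs0ρ
  -- ρ ∘ sol is antitone on [0, ∞)
  have hsolcont : ContinuousOn sol (Set.Ici 0) := fun t ht =>
    (hsol t ht).continuousAt.continuousWithinAt
  have hderiv : ∀ t, 0 ≤ t → HasDerivAt (fun s => ρ (sol s)) (g (sol t)) t := fun t ht =>
    (hρdiff _ (hsolD t ht)).hasFDerivAt.comp_hasDerivAt t (hsol t ht)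
  have hanti : AntitoneOn (fun s => ρ (sol s)) (Set.Ici 0) := by
    apply antitoneOn_of_deriv_nonpos (convex_Ici 0)
    · exact hρcont.comp hsolcont fun t ht => hsolD t ht
    · intro t ht
      rw [interior_Ici] at ht
      exact ((hderiv t ht.le).differentiableAt).differentiableWithinAt
    · intro t ht
      rw [interior_Ici] at ht
      rw [(hderiv t ht.le).deriv]
      exact hgnonpos _ (hsolD t ht.le)
  -- the solution stays in the open ball of radius r
  have hstay : ∀ t, 0 ≤ t → sol t ∈ Metric.ball (0 : EuclideanSpace ℝ (Fin n)) r := by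
    intro t ht
    by_contra hcon
    have hnorm : r ≤ ‖sol t‖ := by
      simpa [Metric.mem_ball, dist_zero_right, not_lt] using hcon
    have h0n : ‖sol 0‖ < r := by simpa [Metric.mem_ball, dist_zero_right] using hs0ball
    have hmem : r ∈ Set.Icc (‖sol 0‖) (‖sol t‖) := ⟨h0n.le, hnorm⟩
    have hcont : ContinuousOn (fun s => ‖sol s‖) (Set.Icc 0 t) :=
      (hsolcont.mono (fun s hs => hs.1)).norm
    obtain ⟨s, hsIcc, hs⟩ := intermediate_value_Icc ht hcont hmem
    have hsph : sol s ∈ Metric.sphere (0 : EuclideanSpace ℝ (Fin n)) r := by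
      simp [Metric.mem_sphere, dist_zero_right, hs]
    have hms : m ≤ ρ (sol s) := hx₀min hsph
    have : ρ (sol s) ≤ ρ (sol 0) := hanti Set.self_mem_Ici hsIcc.1 hsIcc.1
    linarith
  constructor
  · exact fun t ht => (hcb (Metric.ball_subset_closedBall (hstay t ht))).2
  -- convergence to 0
  rw [Metric.tendsto_atTop]
  intro ε' hε'
  set ε'' := min ε' r with hε''def
  have hε''pos : 0 < ε'' := lt_min hε' hrpos
  have hε''r : ε'' ≤ r := min_le_right _ _
  -- annulus
  set A := Metric.closedBall (0 : EuclideanSpace ℝ (Fin n)) r \ Metric.ball 0 ε'' with hAdef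
  have hAcomp : IsCompact A := (isCompact_closedBall _ _).diff Metric.isOpen_ball
  have hAne : A.Nonempty := ⟨x₀, Metric.sphere_subset_closedBall hx₀s, by
    simp only [Metric.mem_ball, not_lt, Set.mem_setOf_eq]
    have : dist x₀ (0 : EuclideanSpace ℝ (Fin n)) = r := hx₀s
    rw [this]; exact hε''r⟩
  have hAD : A ⊆ D := fun x hx => hcbD hx.1
  have hA0 : ∀ x ∈ A, x ≠ 0 := by
    intro x hx h
    apply hx.2
    rw [h]
    exact Metric.mem_ball_self hε''pos
  obtain ⟨y₀, hy₀A, hy₀min⟩ := hAcomp.exists_isMinOn hAne (hρcont.mono hAD)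
  set mε := ρ y₀ with hmεdef
  have hmεpos : 0 < mε := hρpos y₀ (hAD hy₀A) (hA0 y₀ hy₀A)
  -- there is a time T with ρ (sol T) < mε
  have hT : ∃ T, 0 ≤ T ∧ ρ (sol T) < mε := by
    by_contra hcon
    push_neg at hcon
    have hlow : ∀ t, 0 ≤ t → mε ≤ ρ (sol t) := fun t ht => hcon t ht
    -- the compact set K
    set K := Metric.closedBall (0 : EuclideanSpace ℝ (Fin n)) r ∩ ρ ⁻¹' Set.Ici mε with hKdef
    have hKD : K ⊆ D := fun x hx => hcbD hx.1
    have hKclosed : IsClosed K := by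
      exact (hρcont.mono hcbD).preimage_isClosed_of_isClosed (t := Set.Ici mε)
        Metric.isClosed_closedBall isClosed_Ici
    have hKcomp : IsCompact K :=
      (isCompact_closedBall _ _).of_isClosed_subset hKclosed Set.inter_subset_left
    have hKmem : ∀ t, 0 ≤ t → sol t ∈ K := fun t ht =>
      ⟨Metric.ball_subset_closedBall (hstay t ht), hlow t ht⟩
    have hKne : K.Nonempty := ⟨sol 0, hKmem 0 le_rfl⟩
    have hK0 : ∀ x ∈ K, x ≠ 0 := by
      intro x hx h
      have : mε ≤ ρ x := hx.2
      rw [h, hρ0] at this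
      linarith
    obtain ⟨z₀, hz₀K, hz₀max⟩ := hKcomp.exists_isMaxOn hKne (hgcont.mono hKD)
    set c := g z₀ with hcdef
    have hcneg : c < 0 := hgneg z₀ (hKD hz₀K) (hK0 z₀ hz₀K)
    -- linear decay
    set t1 := (mε - ρ (sol 0) - 1) / c with ht1def
    have ht1pos : 0 < t1 := by
      apply div_pos_of_neg_of_neg _ hcneg
      have := hlow 0 le_rfl
      linarith
    have hdecay : ρ (sol t1) - ρ (sol 0) ≤ c * t1 := by
      have := (convex_Ici (0:ℝ)).image_sub_le_mul_sub_of_deriv_le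
        (f := fun s => ρ (sol s)) (C := c)
        (hρcont.comp hsolcont fun t ht => hsolD t ht)
        (fun t ht => by
          rw [interior_Ici] at ht
          exact ((hderiv t ht.le).differentiableAt).differentiableWithinAt)
        (fun t ht => by
          rw [interior_Ici] at ht
          rw [(hderiv t ht.le).deriv]
          exact (hz₀max (hKmem t ht.le) : g (sol t) ≤ c))
        0 Set.self_mem_Ici t1 ht1pos.le ht1pos.le
      simpa using this
    have hct1 : c * t1 = mε - ρ (sol 0) - 1 := by
      rw [ht1def, mul_div_cancel₀ _ hcneg.ne]
    have := hlow t1 ht1pos.le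
    rw [hct1] at hdecay
    linarith
  obtain ⟨T, hT0, hTρ⟩ := hT
  refine ⟨T, fun t ht => ?_⟩
  have ht0 : 0 ≤ t := le_trans hT0 ht
  have hρt : ρ (sol t) < mε := lt_of_le_of_lt (hanti hT0 ht0 ht) hTρ
  have hball' : sol t ∈ Metric.ball (0 : EuclideanSpace ℝ (Fin n)) ε'' := by
    by_contra hcon
    have hmemA : sol t ∈ A :=
      ⟨Metric.ball_subset_closedBall (hstay t ht0), hcon⟩
    have h5 : mε ≤ ρ (sol t) := hy₀min hmemA
    linarith
  calc dist (sol t) 0 < ε'' := by simpa [Metric.mem_ball] using hball'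
    _ ≤ ε' := min_le_left _ _
end

section
/- Let A be an n×n real matrix, P an n×n symmetric positive definite matrix, α > 0 and β > 1 real numbers. If trace(A) ≤ 0 and the matrix AᵀP + PA − (1/α)·((β−1)/(β+1))·trace(A)·P is negative definite, then the origin is a stable equilibrium of the linear system ẋ = Ax. -/
open scoped BigOperators
open Matrix

theorem linear_stability_case1 {n : ℕ} (A P : Matrix (Fin n) (Fin n) ℝ)
    (hP : P.PosDef) (α β : ℝ) (hα : 0 < α) (hβ : 1 < β) (htr : A.trace ≤ 0)
    (hND : (-(Aᵀ * P + P * A - ((1 / α) * ((β - 1) / (β + 1)) * A.trace) • P)).PosDef) :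
    ∀ ε > 0, ∃ δ > 0, ∀ sol : ℝ → (Fin n → ℝ),
      (∀ t, HasDerivAt sol (A.mulVec (sol t)) t) →
      ‖sol 0‖ < δ → ∀ t, 0 ≤ t → ‖sol t‖ < ε := by
  intro ε hε
  rcases Nat.eq_zero_or_pos n with hn | hn
  · refine ⟨1, one_pos, fun sol _ _ t _ => ?_⟩
    subst hn
    have : sol t = 0 := Subsingleton.elim _ _
    rw [this, norm_zero]; exact hε
  -- the Lyapunov function
  set V : (Fin n → ℝ) → ℝ := fun x => x ⬝ᵥ P *ᵥ x with hV
  set S : Matrix (Fin n) (Fin n) ℝ := Aᵀ * P + P * A with hS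
  -- V is continuous
  have hVc : Continuous V := by
    have : V = fun x : Fin n → ℝ => ∑ i, x i * ∑ j, P i j * x j := by
      funext x; simp [hV, dotProduct, Matrix.mulVec]
    rw [this]
    exact continuous_finset_sum _ fun i _ =>
      (continuous_apply i).mul (continuous_finset_sum _ fun j _ =>
        continuous_const.mul (continuous_apply j))
  -- positivity of V
  have hVpos : ∀ x : Fin n → ℝ, x ≠ 0 → 0 < V x := by
    intro x hx
    simpa using hP.dotProduct_mulVec_pos hx
  -- quadratic form of S is nonpositive
  have hSneg : ∀ x : Fin n → ℝ, x ⬝ᵥ S *ᵥ x ≤ 0 := by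
    intro x
    rcases eq_or_ne x 0 with rfl | hx
    · simp
    · have h1 := hND.dotProduct_mulVec_pos hx
      have hc : (1 / α) * ((β - 1) / (β + 1)) ≥ 0 :=
        mul_nonneg (one_div_nonneg.mpr hα.le)
          (div_nonneg (by linarith) (by linarith))
      have hc' : (1 / α) * ((β - 1) / (β + 1)) * A.trace ≤ 0 :=
        mul_nonpos_of_nonneg_of_nonpos hc htr
      have hPx : 0 < x ⬝ᵥ P *ᵥ x := hVpos x hx
      have h2 : 0 < -(x ⬝ᵥ S *ᵥ x) + (1 / α) * ((β - 1) / (β + 1)) * A.trace * (x ⬝ᵥ P *ᵥ x) := by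
        have := h1
        simp only [star_trivial, Matrix.neg_mulVec, Matrix.sub_mulVec,
          Matrix.smul_mulVec, dotProduct_neg, dotProduct_sub,
          dotProduct_smul, smul_eq_mul, hS] at this ⊢
        linarith
      have h3 : (1 / α) * ((β - 1) / (β + 1)) * A.trace * (x ⬝ᵥ P *ᵥ x) ≤ 0 :=
        mul_nonpos_of_nonpos_of_nonneg hc' hPx.le
      linarith
  -- homogeneity of V
  have hVhom : ∀ (c : ℝ) (x : Fin n → ℝ), V (c • x) = c ^ 2 * V x := by
    intro c x
    simp only [hV, Matrix.mulVec_smul, smul_dotProduct, dotProduct_smul, smul_eq_mul]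
    ring
  -- min and max of V on the unit sphere
  haveI : Nonempty (Fin n) := ⟨⟨0, hn⟩⟩
  have hsph : (Metric.sphere (0 : Fin n → ℝ) 1).Nonempty :=
    NormedSpace.sphere_nonempty.mpr zero_le_one
  obtain ⟨xm, hxm_mem, hxm⟩ :=
    (isCompact_sphere (0 : Fin n → ℝ) 1).exists_isMinOn hsph hVc.continuousOn
  obtain ⟨xM, hxM_mem, hxM⟩ :=
    (isCompact_sphere (0 : Fin n → ℝ) 1).exists_isMaxOn hsph hVc.continuousOn
  have hxm_norm : ‖xm‖ = 1 := by simpa using hxm_mem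
  set m : ℝ := V xm with hm
  set M : ℝ := V xM with hM
  have hm_pos : 0 < m := hVpos xm (by intro h; rw [h] at hxm_norm; simp at hxm_norm)
  have hmM : m ≤ M := hxM hxm_mem
  have hM_pos : 0 < M := lt_of_lt_of_le hm_pos hmM
  -- two-sided bounds for V
  have hlow : ∀ x : Fin n → ℝ, m * ‖x‖ ^ 2 ≤ V x := by
    intro x
    rcases eq_or_ne x 0 with rfl | hx
    · simp [hV]
    · have hxn : ‖x‖ ≠ 0 := norm_ne_zero_iff.mpr hx
      set u : Fin n → ℝ := ‖x‖⁻¹ • x with hu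
      have hun : ‖u‖ = 1 := by
        rw [hu, norm_smul, norm_inv, norm_norm, inv_mul_cancel₀ hxn]
      have hxu : x = ‖x‖ • u := by
        rw [hu, smul_smul, mul_inv_cancel₀ hxn, one_smul]
      have h1 : V x = ‖x‖ ^ 2 * V u := by rw [hxu, hVhom]; rw [← hxu]
      have h2 : m ≤ V u := hxm (by simpa using hun)
      rw [h1]
      have := mul_le_mul_of_nonneg_left h2 (sq_nonneg ‖x‖)
      linarith
  have hupp : ∀ x : Fin n → ℝ, V x ≤ M * ‖x‖ ^ 2 := by
    intro x
    rcases eq_or_ne x 0 with rfl | hx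
    · simp [hV]
    · have hxn : ‖x‖ ≠ 0 := norm_ne_zero_iff.mpr hx
      set u : Fin n → ℝ := ‖x‖⁻¹ • x with hu
      have hun : ‖u‖ = 1 := by
        rw [hu, norm_smul, norm_inv, norm_norm, inv_mul_cancel₀ hxn]
      have hxu : x = ‖x‖ • u := by
        rw [hu, smul_smul, mul_inv_cancel₀ hxn, one_smul]
      have h1 : V x = ‖x‖ ^ 2 * V u := by rw [hxu, hVhom]; rw [← hxu]
      have h2 : V u ≤ M := hxM (by simpa using hun)
      rw [h1]
      have := mul_le_mul_of_nonneg_left h2 (sq_nonneg ‖x‖)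
      linarith
  -- choose δ
  refine ⟨ε * Real.sqrt (m / M),
    mul_pos hε (Real.sqrt_pos.mpr (div_pos hm_pos hM_pos)), fun sol hsol h0 t ht => ?_⟩
  -- derivative of V along the solution
  have hderiv : ∀ s : ℝ,
      HasDerivAt (fun s => V (sol s)) (sol s ⬝ᵥ S *ᵥ sol s) s := by
    intro s
    have hcomp : ∀ i, HasDerivAt (fun r => sol r i) ((A *ᵥ sol s) i) s := by
      intro i
      exact hasDerivAt_pi.mp (hsol s) i
    have hsum : HasDerivAt (fun r => ∑ i, sol r i * ∑ j, P i j * sol r j)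
        (∑ i, ((A *ᵥ sol s) i * (∑ j, P i j * sol s j)
          + sol s i * ∑ j, P i j * (A *ᵥ sol s) j)) s := by
      refine HasDerivAt.fun_sum fun i _ => ?_
      exact (hcomp i).mul (HasDerivAt.fun_sum fun j _ => (hcomp j).const_mul (P i j))
    have heq1 : (fun s => V (sol s)) = fun r => ∑ i, sol r i * ∑ j, P i j * sol r j := by
      funext r; simp [hV, dotProduct, Matrix.mulVec]
    have heq2 : (∑ i, ((A *ᵥ sol s) i * (∑ j, P i j * sol s j)
          + sol s i * ∑ j, P i j * (A *ᵥ sol s) j))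
        = sol s ⬝ᵥ S *ᵥ sol s := by
      have hterm : (∑ i, ((A *ᵥ sol s) i * (∑ j, P i j * sol s j)
          + sol s i * ∑ j, P i j * (A *ᵥ sol s) j))
          = (A *ᵥ sol s) ⬝ᵥ (P *ᵥ sol s) + sol s ⬝ᵥ (P *ᵥ (A *ᵥ sol s)) := by
        simp [dotProduct, Matrix.mulVec, Finset.sum_add_distrib]
      rw [hterm, hS, Matrix.add_mulVec, dotProduct_add, ← Matrix.mulVec_mulVec,
        ← Matrix.mulVec_mulVec]
      congr 1
      conv_rhs => rw [Matrix.dotProduct_mulVec, Matrix.vecMul_transpose]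
    rw [heq1, ← heq2]
    exact hsum
  -- V (sol t) ≤ V (sol 0) for t ≥ 0
  have hmono : AntitoneOn (fun s => V (sol s)) (Set.Ici (0 : ℝ)) := by
    apply antitoneOn_of_deriv_nonpos (convex_Ici 0)
    · exact (continuous_iff_continuousAt.mpr fun s => (hderiv s).continuousAt).continuousOn
    · intro s _
      exact ((hderiv s).differentiableAt).differentiableWithinAt
    · intro s _
      rw [(hderiv s).deriv]
      exact hSneg (sol s)
  have hVle : V (sol t) ≤ V (sol 0) :=
    hmono (Set.self_mem_Ici) (Set.mem_Ici.mpr ht) ht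
  -- conclude
  have hδ2 : M * (ε * Real.sqrt (m / M)) ^ 2 = m * ε ^ 2 := by
    rw [mul_pow, Real.sq_sqrt (div_pos hm_pos hM_pos).le]
    field_simp
  have hstart : V (sol 0) < m * ε ^ 2 := by
    have h1 : V (sol 0) ≤ M * ‖sol 0‖ ^ 2 := hupp _
    have h2 : ‖sol 0‖ ^ 2 < (ε * Real.sqrt (m / M)) ^ 2 := by
      apply pow_lt_pow_left₀ h0 (norm_nonneg _)
      norm_num
    calc V (sol 0) ≤ M * ‖sol 0‖ ^ 2 := h1
      _ < M * (ε * Real.sqrt (m / M)) ^ 2 := by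
          exact mul_lt_mul_of_pos_left h2 hM_pos
      _ = m * ε ^ 2 := hδ2
  have hfinal : m * ‖sol t‖ ^ 2 < m * ε ^ 2 := by
    calc m * ‖sol t‖ ^ 2 ≤ V (sol t) := hlow _
      _ ≤ V (sol 0) := hVle
      _ < m * ε ^ 2 := hstart
  have : ‖sol t‖ ^ 2 < ε ^ 2 := lt_of_mul_lt_mul_left hfinal hm_pos.le
  exact lt_of_pow_lt_pow_left₀ 2 hε.le this
end

section
/- Let A be an n×n real matrix and P symmetric positive definite with AᵀP + PA − trace(A)·P negative definite and AᵀP + PA + trace(A)·P negative definite. Then with ρ(x) = (xᵀPx)^α for a positive integer α, the vector field f(x) = Ax satisfies div(ρ·f)(x) < 0 and div(ρ⁻¹·f)(x) > 0 for all x ≠ 0, provided α = 1. -/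
open Matrix
open scoped BigOperators

/-- Divergence of a vector field on ℝⁿ (as `Fin n → ℝ`). -/
noncomputable def pdiv {n : ℕ} (f : (Fin n → ℝ) → (Fin n → ℝ)) (x : Fin n → ℝ) : ℝ :=
  ∑ i, fderiv ℝ f x (Pi.single i (1:ℝ)) i

theorem linear_div_sign_conditions {n : ℕ} (A P : Matrix (Fin n) (Fin n) ℝ)
    (hP : P.PosDef)
    (h1 : (-(Aᵀ * P + P * A - A.trace • P)).PosDef)
    (h2 : (-(Aᵀ * P + P * A + A.trace • P)).PosDef)
    (α : ℕ) (hα1 : α = 1) :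
    ∀ x : Fin n → ℝ, x ≠ 0 →
      pdiv (fun y => ((y ⬝ᵥ P.mulVec y) ^ α) • A.mulVec y) x < 0 ∧
      0 < pdiv (fun y => ((y ⬝ᵥ P.mulVec y) ^ α)⁻¹ • A.mulVec y) x := by
  subst hα1
  intro x hx
  classical
  have hPsym : Pᵀ = P := by
    have h := hP.1
    rwa [Matrix.IsHermitian, Matrix.conjTranspose_eq_transpose_of_trivial] at h
  set mA : (Fin n → ℝ) →L[ℝ] (Fin n → ℝ) := LinearMap.toContinuousLinearMap A.mulVecLin with hmA
  set mP : (Fin n → ℝ) →L[ℝ] (Fin n → ℝ) := LinearMap.toContinuousLinearMap P.mulVecLin with hmP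
  set G : (Fin n → ℝ) →L[ℝ] ℝ :=
    ∑ i : Fin n, ((x i) • ((ContinuousLinearMap.proj i : (Fin n → ℝ) →L[ℝ] ℝ).comp mP)
      + (P.mulVec x i) • (ContinuousLinearMap.proj i : (Fin n → ℝ) →L[ℝ] ℝ)) with hGdef
  set r : ℝ := x ⬝ᵥ P.mulVec x with hrdef
  have hr : 0 < r := by
    have := hP.dotProduct_mulVec_pos hx
    simpa using this
  have hr0 : r ≠ 0 := ne_of_gt hr
  -- derivative of the quadratic form
  have hg : HasFDerivAt (fun y : Fin n → ℝ => y ⬝ᵥ P.mulVec y) G x := by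
    have h1 : (fun y : Fin n → ℝ => y ⬝ᵥ P.mulVec y)
        = fun y => ∑ i, (ContinuousLinearMap.proj i : (Fin n → ℝ) →L[ℝ] ℝ) y
            * ((ContinuousLinearMap.proj i : (Fin n → ℝ) →L[ℝ] ℝ).comp mP) y := by
      funext y; simp [dotProduct, hmP]
    rw [h1, hGdef]
    exact HasFDerivAt.fun_sum fun i _ =>
      (ContinuousLinearMap.proj i).hasFDerivAt.mul
        (((ContinuousLinearMap.proj i : (Fin n → ℝ) →L[ℝ] ℝ).comp mP).hasFDerivAt)
  have hA : HasFDerivAt (fun y : Fin n → ℝ => A.mulVec y) mA x := mA.hasFDerivAt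
  -- evaluation of G at basis vectors
  have hGe : ∀ i, G (Pi.single i (1:ℝ)) = (P.mulVec x) i + (P.mulVec x) i := by
    intro i
    rw [hGdef]
    simp only [ContinuousLinearMap.sum_apply, ContinuousLinearMap.add_apply,
      ContinuousLinearMap.smul_apply, ContinuousLinearMap.comp_apply,
      ContinuousLinearMap.proj_apply]
    have hmPapp : ∀ v, mP v = P.mulVec v := fun v => rfl
    simp only [hmPapp, Matrix.mulVec_single, mul_one, smul_eq_mul]
    rw [Finset.sum_add_distrib]
    congr 1
    · have : ∑ j : Fin n, x j * P j i = (Pᵀ.mulVec x) i := by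
        simp [Matrix.mulVec, dotProduct, Matrix.transpose_apply, mul_comm]
      rw [hPsym] at this; rw [← this]; simp
    · simp [Pi.single_apply, Finset.sum_ite_eq', mul_comm]
  -- trace sum
  have htr : ∑ i, (A.mulVec (Pi.single i (1:ℝ))) i = A.trace := by
    simp [Matrix.mulVec_single, Matrix.trace, Matrix.diag]
  -- key dot product identities
  have key : x ⬝ᵥ ((Aᵀ * P) *ᵥ x) = (A.mulVec x) ⬝ᵥ (P.mulVec x) := by
    rw [← Matrix.mulVec_mulVec, Matrix.dotProduct_mulVec, Matrix.vecMul_transpose]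
  have key2 : x ⬝ᵥ ((P * A) *ᵥ x) = (P.mulVec x) ⬝ᵥ (A.mulVec x) := by
    rw [← Matrix.mulVec_mulVec, Matrix.dotProduct_mulVec]
    congr 1
    rw [← hPsym, Matrix.vecMul_transpose, hPsym]
  set S : ℝ := (P.mulVec x) ⬝ᵥ (A.mulVec x) with hSdef
  have hcomm : (A.mulVec x) ⬝ᵥ (P.mulVec x) = S := dotProduct_comm _ _
  -- bound from h2
  have hb2 : S + S + A.trace * r < 0 := by
    have h := h2.dotProduct_mulVec_pos hx
    simp only [star_trivial, Matrix.neg_mulVec, dotProduct_neg, Matrix.add_mulVec,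
      Matrix.smul_mulVec, dotProduct_add, dotProduct_smul, smul_eq_mul,
      key, key2, hcomm] at h
    linarith [h]
  have hb1 : 0 < A.trace * r - (S + S) := by
    have h := h1.dotProduct_mulVec_pos hx
    simp only [star_trivial, Matrix.neg_mulVec, dotProduct_neg, Matrix.sub_mulVec,
      Matrix.add_mulVec, Matrix.smul_mulVec, dotProduct_add, dotProduct_sub,
      dotProduct_smul, smul_eq_mul, key, key2, hcomm] at h
    linarith [h]
  constructor
  · -- first part
    have hF : HasFDerivAt (fun y : Fin n → ℝ => (y ⬝ᵥ P.mulVec y) • A.mulVec y)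
        (r • mA + G.smulRight (A.mulVec x)) x := hg.smul hA
    have hpd : pdiv (fun y => ((y ⬝ᵥ P.mulVec y) ^ 1) • A.mulVec y) x
        = r * A.trace + (S + S) := by
      simp only [pow_one]
      unfold pdiv
      rw [hF.fderiv]
      simp only [ContinuousLinearMap.add_apply, ContinuousLinearMap.smul_apply,
        ContinuousLinearMap.smulRight_apply, Pi.add_apply, Pi.smul_apply, smul_eq_mul]
      have hmAapp : ∀ v, mA v = A.mulVec v := fun v => rfl
      simp only [hmAapp, hGe]
      rw [Finset.sum_add_distrib, ← Finset.mul_sum, htr]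
      congr 1
      rw [hSdef]
      simp only [dotProduct]
      rw [← Finset.sum_add_distrib]
      congr 1; funext i; ring_nf
    rw [hpd]; linarith
  · -- second part
    have hinv : HasFDerivAt (fun y : Fin n → ℝ => (y ⬝ᵥ P.mulVec y)⁻¹)
        ((-(ContinuousLinearMap.mulLeftRight ℝ ℝ r⁻¹ r⁻¹)).comp G) x :=
      (hasFDerivAt_inv' hr0).comp x hg
    have hF : HasFDerivAt (fun y : Fin n → ℝ => (y ⬝ᵥ P.mulVec y)⁻¹ • A.mulVec y)
        (r⁻¹ • mA + ((-(ContinuousLinearMap.mulLeftRight ℝ ℝ r⁻¹ r⁻¹)).comp G).smulRight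
          (A.mulVec x)) x := hinv.smul hA
    have hpd : pdiv (fun y => ((y ⬝ᵥ P.mulVec y) ^ 1)⁻¹ • A.mulVec y) x
        = r⁻¹ * A.trace - r⁻¹ * r⁻¹ * (S + S) := by
      simp only [pow_one]
      unfold pdiv
      rw [hF.fderiv]
      simp only [ContinuousLinearMap.add_apply, ContinuousLinearMap.smul_apply,
        ContinuousLinearMap.comp_apply, ContinuousLinearMap.neg_apply,
        ContinuousLinearMap.mulLeftRight_apply, ContinuousLinearMap.smulRight_apply,
        Pi.add_apply, Pi.smul_apply, smul_eq_mul]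
      have hmAapp : ∀ v, mA v = A.mulVec v := fun v => rfl
      simp only [hmAapp, hGe]
      rw [Finset.sum_add_distrib, ← Finset.mul_sum, htr]
      have hS2 : ∑ i, -(r⁻¹ * ((P.mulVec x) i + (P.mulVec x) i) * r⁻¹) * (A.mulVec x) i
          = -(r⁻¹ * r⁻¹ * (S + S)) := by
        rw [hSdef]
        simp only [dotProduct]
        have he : ∀ i, -(r⁻¹ * ((P.mulVec x) i + (P.mulVec x) i) * r⁻¹) * (A.mulVec x) i
            = -(r⁻¹ * r⁻¹ * ((P.mulVec x) i * (A.mulVec x) i + (P.mulVec x) i * (A.mulVec x) i)) :=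
          fun i => by ring
        simp only [he, Finset.mul_sum, ← Finset.sum_add_distrib, neg_mul, Finset.sum_neg_distrib, mul_add]
        congr 1
        exact Finset.sum_congr rfl fun i _ => by ring
      rw [hS2]
      ring
    rw [hpd]
    have heq : r⁻¹ * A.trace - r⁻¹ * r⁻¹ * (S + S)
        = r⁻¹ * r⁻¹ * (A.trace * r - (S + S)) := by
      field_simp
    rw [heq]
    exact mul_pos (mul_pos (inv_pos.2 hr) (inv_pos.2 hr)) hb1
end
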